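/- Let n ≥ 1 and let q1, q3, z be invertible elements of a commutative ring. For every Young diagram λ, ∏_{(i,j)∈λ, i ≡ j (mod n)} (1 − z q1^{j−1} q3^{i−1}) = N_{λ∅}(z; q1, q3), i.e. the product over boxes of color 0 equals ∏_{(i,j)∈λ, λ_i−j−i+1 ≡ 0 (mod n)} (1 − z q1^{λ_i−j} q3^{i−1}). -/

import Mathlib

open Finset

/-- Arm length of the (0-based) box `c` with respect to `μ` (may be negative). -/
def armZ (μ : YoungDiagram) (c : ℕ × ℕ) : ℤ := (μ.rowLen c.1 : ℤ) - c.2 - 1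

/-- Leg length of the (0-based) box `c` with respect to `μ` (may be negative). -/
def legZ (μ : YoungDiagram) (c : ℕ × ℕ) : ℤ := (μ.colLen c.2 : ℤ) - c.1 - 1

/-- Relative hook length `h_{λ,μ}(s) = a_μ(s) + ℓ_λ(s) + 1`. -/
def relHook (lam mu : YoungDiagram) (c : ℕ × ℕ) : ℤ := armZ mu c + legZ lam c + 1

/-- The bifundamental Nekrasov factor on `ALE_n × S¹`. -/
def nek {R : Type*} [CommRing R] (n : ℕ) (q1 q3 z : Rˣ) (lam mu : YoungDiagram) : R :=
  (∏ s ∈ lam.cells.filter (fun s => ((relHook mu lam s : ZMod n) = 0)),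
    (1 - ((z * q1 ^ armZ lam s * q3 ^ (-legZ mu s - 1) : Rˣ) : R))) *
  (∏ t ∈ mu.cells.filter (fun t => ((relHook lam mu t : ZMod n) = 0)),
    (1 - ((z * q1 ^ (-armZ mu t - 1) * q3 ^ legZ lam t : Rˣ) : R)))

lemma colLen_bot (j : ℕ) : (⊥ : YoungDiagram).colLen j = 0 := by
  by_contra h
  have : (0, j) ∈ (⊥ : YoungDiagram) :=
    YoungDiagram.mem_iff_lt_colLen.mpr (Nat.pos_of_ne_zero h)
  simp [← YoungDiagram.mem_cells, YoungDiagram.cells_bot] at this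

/-- The product over the boxes of color `0` of `λ` (boxes `(i,j)` with `i ≡ j (mod n)`
in 1-based coordinates; the factor for the box `(i,j)` is `1 - z q1^{j-1} q3^{i-1}`)
equals the vacuum Nekrasov factor `N_{λ∅}(z; q1, q3)`. -/
theorem color_zero_prod_eq_nek_empty {R : Type*} [CommRing R] (n : ℕ) (hn : 1 ≤ n)
    (q1 q3 z : Rˣ) (lam : YoungDiagram) :
    (∏ c ∈ lam.cells.filter (fun c => ((c.1 : ZMod n) = (c.2 : ZMod n))),
      (1 - ((z * q1 ^ (c.2 : ℤ) * q3 ^ (c.1 : ℤ) : Rˣ) : R)))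
    = nek n q1 q3 z lam ⊥ := by
  rw [nek]
  rw [show ((⊥ : YoungDiagram).cells.filter
      (fun t => ((relHook lam ⊥ t : ZMod n) = 0))) = ∅ by
    simp [YoungDiagram.cells_bot]]
  rw [Finset.prod_empty, mul_one]
  have hmem : ∀ c : ℕ × ℕ, c ∈ lam.cells ↔ c.2 < lam.rowLen c.1 := by
    rintro ⟨i, j⟩
    rw [YoungDiagram.mem_cells, YoungDiagram.mem_iff_lt_rowLen]
  have harm : ∀ i j : ℕ, j < lam.rowLen i →
      armZ lam (i, lam.rowLen i - 1 - j) = (j : ℤ) := by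
    intro i j h
    simp only [armZ]
    push_cast [show ((lam.rowLen i - 1 - j : ℕ) : ℤ) = (lam.rowLen i : ℤ) - 1 - j by omega]
    ring
  have hleg : ∀ c : ℕ × ℕ, legZ (⊥ : YoungDiagram) c = -(c.1 : ℤ) - 1 := by
    intro c; simp [legZ, colLen_bot]
  have hhook : ∀ i j : ℕ, relHook ⊥ lam (i, j) = (lam.rowLen i : ℤ) - j - i - 1 := by
    intro i j
    simp only [relHook, armZ, legZ, colLen_bot]
    push_cast
    ring
  refine Finset.prod_nbij' (fun c => (c.1, lam.rowLen c.1 - 1 - c.2))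
    (fun c => (c.1, lam.rowLen c.1 - 1 - c.2)) ?_ ?_ ?_ ?_ ?_
  · rintro ⟨i, j⟩ hc
    rw [Finset.mem_filter, hmem] at hc
    dsimp only at hc ⊢
    obtain ⟨h1, h2⟩ := hc
    rw [Finset.mem_filter, hmem]
    dsimp only
    refine ⟨by omega, ?_⟩
    rw [hhook]
    rw [show ((lam.rowLen i - 1 - j : ℕ) : ℤ) = (lam.rowLen i : ℤ) - 1 - j by omega]
    push_cast
    linear_combination -h2
  · rintro ⟨i, j⟩ hc
    rw [Finset.mem_filter, hmem] at hc
    dsimp only at hc ⊢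
    obtain ⟨h1, h2⟩ := hc
    rw [hhook] at h2
    rw [Finset.mem_filter, hmem]
    dsimp only
    refine ⟨by omega, ?_⟩
    rw [show ((lam.rowLen i - 1 - j : ℕ) : ZMod n)
        = (((lam.rowLen i : ℤ) - 1 - j : ℤ) : ZMod n) by
      rw [← Int.cast_natCast,
        show ((lam.rowLen i - 1 - j : ℕ) : ℤ) = (lam.rowLen i : ℤ) - 1 - j by omega]]
    push_cast at h2 ⊢
    linear_combination -h2
  · rintro ⟨i, j⟩ hc
    rw [Finset.mem_filter, hmem] at hc
    dsimp only at hc ⊢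
    simp only [Prod.mk.injEq]
    exact ⟨trivial, by omega⟩
  · rintro ⟨i, j⟩ hc
    rw [Finset.mem_filter, hmem] at hc
    dsimp only at hc ⊢
    simp only [Prod.mk.injEq]
    exact ⟨trivial, by omega⟩
  · rintro ⟨i, j⟩ hc
    rw [Finset.mem_filter, hmem] at hc
    dsimp only at hc ⊢
    obtain ⟨h1, _⟩ := hc
    rw [harm i j h1, hleg]
    norm_num
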